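/- Let f be a tower-stable polynomial with integer coefficients, a an integer, p a prime number, and k a positive integer. If p divides the mod-p multiplier μ_p of f at a, then λ_{f,a}(p^k) = λ_{f,a}(p) and ρ_{f,a}(p^k) ≤ ρ_{f,a}(p) + (k − 1)·λ_{f,a}(p). -/

import Mathlib

/-- `σ` is a cyclic permutation of length `p` of its (finite) domain: it is a
bijection and the iterates of some element pass through all elements within
`p` steps. -/
def IsCyclicPermOfLength {F : Type*} (σ : F → F) (p : ℕ) : Prop :=
  Function.Bijective σ ∧ ∃ x : F, ∀ y : F, ∃ i : ℕ, i < p ∧ σ^[i] x = y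

/-- The reduction `f_m : ℤ/mℤ → ℤ/mℤ` of a polynomial `f ∈ ℤ[x]`. -/
def polyRed (f : Polynomial ℤ) (m : ℕ) : ZMod m → ZMod m :=
  fun x => Polynomial.eval₂ (Int.castRingHom (ZMod m)) x f

/-- A polynomial `f ∈ ℤ[x]` is tower-stable if no reduction modulo a prime
`q` is a cyclic permutation of length `q`. -/
def PolyTowerStable (f : Polynomial ℤ) : Prop :=
  ∀ q : ℕ, q.Prime → ¬ IsCyclicPermOfLength (polyRed f q) q

/-- `ρ_{f,a}(n)`: the tail length of the reduction of `f` mod `n` at the class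
of `a`, i.e. the least `k` with `f^{k+l}(a) ≡ f^k(a) (mod n)` for some `l > 0`. -/
noncomputable def polyTail (f : Polynomial ℤ) (a : ℤ) (n : ℕ) : ℕ :=
  sInf {k : ℕ | ∃ l : ℕ, 0 < l ∧
    (n : ℤ) ∣ (fun z => f.eval z)^[k + l] a - (fun z => f.eval z)^[k] a}

/-- `λ_{f,a}(n)`: the cycle length of the reduction of `f` mod `n` at the class
of `a`, i.e. the least `l > 0` with `f^{k+l}(a) ≡ f^k(a) (mod n)` for some `k`. -/
noncomputable def polyCycle (f : Polynomial ℤ) (a : ℤ) (n : ℕ) : ℕ :=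
  sInf {l : ℕ | 0 < l ∧ ∃ k : ℕ,
    (n : ℤ) ∣ (fun z => f.eval z)^[k + l] a - (fun z => f.eval z)^[k] a}

/-- The `m`-th iterate of `f` as a polynomial. -/
noncomputable def polyIter (f : Polynomial ℤ) (m : ℕ) : Polynomial ℤ :=
  (fun q => q.comp f)^[m] Polynomial.X

/-- The mod `p` multiplier `μ_p = (f^{λ(p)})'(f^{ρ(p)}(a))` of `f` at `a`. -/
noncomputable def muP (f : Polynomial ℤ) (a : ℤ) (p : ℕ) : ℤ :=
  (Polynomial.derivative (polyIter f (polyCycle f a p))).eval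
    ((fun z => f.eval z)^[polyTail f a p] a)

section helpers
variable (f : Polynomial ℤ) (a : ℤ)

/-- auxiliary: the orbit sequence of `a` under `f`. -/
def xSeq (m : ℕ) : ℤ := (fun z => f.eval z)^[m] a

lemma xSeq_succ (m : ℕ) : xSeq f a (m+1) = f.eval (xSeq f a m) := by
  simp only [xSeq, Function.iterate_succ_apply']

lemma step_dvd (n : ℤ) (m m' : ℕ) (h : n ∣ xSeq f a m - xSeq f a m') :
    n ∣ xSeq f a (m+1) - xSeq f a (m'+1) := by
  rw [xSeq_succ, xSeq_succ]
  exact h.trans (Polynomial.sub_dvd_eval_sub _ _ f)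

lemma shift_dvd (n : ℤ) (m m' t : ℕ) (h : n ∣ xSeq f a m - xSeq f a m') :
    n ∣ xSeq f a (m+t) - xSeq f a (m'+t) := by
  induction t with
  | zero => simpa using h
  | succ t ih => exact step_dvd f a n (m+t) (m'+t) ih

lemma mult_dvd (n : ℤ) (kk l : ℕ) (h : n ∣ xSeq f a (kk+l) - xSeq f a kk) :
    ∀ j, n ∣ xSeq f a (kk + j*l) - xSeq f a kk := by
  intro j
  induction j with
  | zero => simp
  | succ j ih =>
    have h2 := shift_dvd f a n (kk+l) kk (j*l) h
    have he : xSeq f a (kk + (j+1)*l) - xSeq f a kk =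
        (xSeq f a (kk+l+j*l) - xSeq f a (kk+j*l)) + (xSeq f a (kk+j*l) - xSeq f a kk) := by
      rw [show kk + (j+1)*l = kk+l+j*l by ring]; ring
    rw [he]
    exact dvd_add h2 ih

lemma iter_eval (m : ℕ) (z : ℤ) : (polyIter f m).eval z = (fun z => f.eval z)^[m] z := by
  induction m generalizing z with
  | zero => simp [polyIter]
  | succ m ih =>
    show ((fun q => q.comp f)^[m+1] Polynomial.X).eval z = _
    rw [Function.iterate_succ_apply', Polynomial.eval_comp, Function.iterate_succ_apply]
    exact ih (f.eval z)

lemma exists_rel (n : ℕ) (hn : 0 < n) :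
    ∃ kk l : ℕ, 0 < l ∧ (n : ℤ) ∣ xSeq f a (kk+l) - xSeq f a kk := by
  haveI : NeZero n := ⟨hn.ne'⟩
  obtain ⟨i, j, hne, hij⟩ := Finite.exists_ne_map_eq_of_infinite
    (fun m : ℕ => ((xSeq f a m : ℤ) : ZMod n))
  have key : ∀ i j : ℕ, i < j → ((xSeq f a i : ℤ) : ZMod n) = ((xSeq f a j : ℤ) : ZMod n) →
      ∃ kk l : ℕ, 0 < l ∧ (n : ℤ) ∣ xSeq f a (kk+l) - xSeq f a kk := by
    intro i j hlt hcast
    refine ⟨i, j - i, by omega, ?_⟩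
    rw [show i + (j-i) = j by omega]
    exact Int.ModEq.dvd ((ZMod.intCast_eq_intCast_iff' _ _ _).1 hcast)
  rcases lt_or_gt_of_ne hne with h | h
  · exact key i j h hij
  · exact key j i h hij.symm

/-- the cycle set for `n`. -/
lemma cycle_mem (n : ℕ) (hn : 0 < n) :
    0 < polyCycle f a n ∧ ∃ kk : ℕ,
      (n : ℤ) ∣ xSeq f a (kk + polyCycle f a n) - xSeq f a kk := by
  obtain ⟨kk, l, hl, hdvd⟩ := exists_rel f a n hn
  have : polyCycle f a n ∈ {l : ℕ | 0 < l ∧ ∃ k : ℕ,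
      (n : ℤ) ∣ (fun z => f.eval z)^[k + l] a - (fun z => f.eval z)^[k] a} :=
    Nat.sInf_mem ⟨l, hl, kk, hdvd⟩
  exact this

lemma tail_mem (n : ℕ) (hn : 0 < n) :
    ∃ l : ℕ, 0 < l ∧
      (n : ℤ) ∣ xSeq f a (polyTail f a n + l) - xSeq f a (polyTail f a n) := by
  obtain ⟨kk, l, hl, hdvd⟩ := exists_rel f a n hn
  have : polyTail f a n ∈ {k : ℕ | ∃ l : ℕ, 0 < l ∧
      (n : ℤ) ∣ (fun z => f.eval z)^[k + l] a - (fun z => f.eval z)^[k] a} :=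
    Nat.sInf_mem ⟨kk, l, hl, hdvd⟩
  exact this

/-- minimal period divides any period. -/
lemma cycle_dvd (n : ℕ) (hn : 0 < n) (kk l : ℕ) (hl : 0 < l)
    (h : (n : ℤ) ∣ xSeq f a (kk+l) - xSeq f a kk) : polyCycle f a n ∣ l := by
  obtain ⟨hpos, k₀, hk₀⟩ := cycle_mem f a n hn
  set lam := polyCycle f a n with hlam
  set k₁ := max kk k₀ with hk₁
  have h1 : (n : ℤ) ∣ xSeq f a (k₁+l) - xSeq f a k₁ := by
    have := shift_dvd f a n (kk+l) kk (k₁ - kk) h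
    rwa [show kk + l + (k₁ - kk) = k₁ + l by omega, show kk + (k₁ - kk) = k₁ by omega] at this
  have h2 : (n : ℤ) ∣ xSeq f a (k₁+lam) - xSeq f a k₁ := by
    have := shift_dvd f a n (k₀+lam) k₀ (k₁ - k₀) hk₀
    rwa [show k₀ + lam + (k₁ - k₀) = k₁ + lam by omega, show k₀ + (k₁ - k₀) = k₁ by omega] at this
  set r := l % lam with hr
  set q := l / lam with hq
  have hql : q * lam + r = l := by rw [hq, hr, Nat.mul_comm]; exact Nat.div_add_mod l lam
  have h3 : (n : ℤ) ∣ xSeq f a (k₁ + q*lam) - xSeq f a k₁ := mult_dvd f a n k₁ lam h2 q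
  have h4 : (n : ℤ) ∣ xSeq f a (k₁ + q*lam + r) - xSeq f a (k₁ + r) :=
    shift_dvd f a n (k₁ + q*lam) k₁ r h3
  have h5 : (n : ℤ) ∣ xSeq f a (k₁ + r) - xSeq f a k₁ := by
    have he : xSeq f a (k₁ + r) - xSeq f a k₁ =
        -(xSeq f a (k₁ + q*lam + r) - xSeq f a (k₁ + r)) + (xSeq f a (k₁+l) - xSeq f a k₁) := by
      rw [show k₁ + q*lam + r = k₁ + l by omega]; ring
    rw [he]; exact dvd_add (dvd_neg.mpr h4) h1
  by_contra hnd
  have hrpos : 0 < r := by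
    rcases Nat.eq_zero_or_pos r with h0 | h0
    · exact absurd (Nat.dvd_of_mod_eq_zero (by omega : l % lam = 0)) hnd
    · exact h0
  have hmem : r ∈ {l : ℕ | 0 < l ∧ ∃ k : ℕ,
      (n : ℤ) ∣ (fun z => f.eval z)^[k + l] a - (fun z => f.eval z)^[k] a} :=
    ⟨hrpos, k₁, h5⟩
  have hle : polyCycle f a n ≤ r := Nat.sInf_le hmem
  have hrlt : r < lam := by rw [hr]; exact Nat.mod_lt _ hpos
  omega

/-- at the tail, the minimal period is a period. -/
lemma tail_cycle_rel (n : ℕ) (hn : 0 < n) :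
    (n : ℤ) ∣ xSeq f a (polyTail f a n + polyCycle f a n) - xSeq f a (polyTail f a n) := by
  obtain ⟨l, hl, hdvd⟩ := tail_mem f a n hn
  obtain ⟨hpos, k₀, hk₀⟩ := cycle_mem f a n hn
  set rho := polyTail f a n
  set lam := polyCycle f a n
  set M := rho + k₀ * l with hM
  have hA : (n : ℤ) ∣ xSeq f a M - xSeq f a rho := mult_dvd f a n rho l hdvd k₀
  have hB : (n : ℤ) ∣ xSeq f a (M + lam) - xSeq f a (rho + lam) :=
    shift_dvd f a n M rho lam hA
  have hC : (n : ℤ) ∣ xSeq f a (M + lam) - xSeq f a M := by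
    have := shift_dvd f a n (k₀ + lam) k₀ (M - k₀) hk₀
    have hMk : k₀ ≤ M := by
      have : k₀ ≤ k₀ * l := Nat.le_mul_of_pos_right k₀ hl
      omega
    rwa [show k₀ + lam + (M - k₀) = M + lam by omega, show k₀ + (M - k₀) = M by omega] at this
  have he : xSeq f a (rho + lam) - xSeq f a rho =
      -(xSeq f a (M + lam) - xSeq f a (rho + lam)) + (xSeq f a (M + lam) - xSeq f a M)
        + (xSeq f a M - xSeq f a rho) := by ring
  rw [he]
  exact dvd_add (dvd_add (dvd_neg.mpr hB) hC) hA

end helpers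

lemma xSeq_add_iter (f : Polynomial ℤ) (a : ℤ) (m l : ℕ) :
    xSeq f a (m + l) = (polyIter f l).eval (xSeq f a m) := by
  rw [iter_eval, xSeq, xSeq, add_comm, Function.iterate_add_apply]

theorem stmt_15 (f : Polynomial ℤ) (hts : PolyTowerStable f) (a : ℤ)
    (p : ℕ) (hp : p.Prime) (k : ℕ) (hk : 0 < k)
    (hmu : (p : ℤ) ∣ muP f a p) :
    polyCycle f a (p ^ k) = polyCycle f a p ∧
      polyTail f a (p ^ k) ≤ polyTail f a p + (k - 1) * polyCycle f a p := by
  clear hts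
  obtain ⟨k', rfl⟩ : ∃ k', k = k' + 1 := ⟨k - 1, by omega⟩
  have hp0 : 0 < p := hp.pos
  set rho := polyTail f a p with hrho
  set lam := polyCycle f a p with hlamdef
  obtain ⟨hlampos, -⟩ := cycle_mem f a p hp0
  have hbase : (p : ℤ) ∣ xSeq f a (rho + lam) - xSeq f a rho := tail_cycle_rel f a p hp0
  have hmu' : (p : ℤ) ∣ (Polynomial.derivative (polyIter f lam)).eval (xSeq f a rho) := hmu
  -- lifting lemma
  have lift : ∀ j : ℕ, (p : ℤ)^(j+1) ∣ xSeq f a (rho + (j+1)*lam) - xSeq f a (rho + j*lam) := by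
    intro j
    induction j with
    | zero => simpa using hbase
    | succ j ih =>
      set b₀ := xSeq f a (rho + j*lam) with hb₀
      set b₁ := xSeq f a (rho + (j+1)*lam) with hb₁
      set b₂ := xSeq f a (rho + (j+2)*lam) with hb₂
      set d := b₁ - b₀ with hd
      have hb₁' : b₁ = (polyIter f lam).eval b₀ := by
        rw [hb₁, hb₀, show rho + (j+1)*lam = (rho + j*lam) + lam by ring, xSeq_add_iter]
      have hb₂' : b₂ = (polyIter f lam).eval b₁ := by
        rw [hb₂, hb₁, show rho + (j+2)*lam = (rho + (j+1)*lam) + lam by ring, xSeq_add_iter]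
      -- p divides the derivative at b₀
      have hderb : (p : ℤ) ∣ (Polynomial.derivative (polyIter f lam)).eval b₀ := by
        have h1 : (p : ℤ) ∣ b₀ - xSeq f a rho := mult_dvd f a p rho lam hbase j
        have h2 := Polynomial.sub_dvd_eval_sub b₀ (xSeq f a rho)
          (Polynomial.derivative (polyIter f lam))
        have h3 : (p : ℤ) ∣ (Polynomial.derivative (polyIter f lam)).eval b₀ -
            (Polynomial.derivative (polyIter f lam)).eval (xSeq f a rho) := h1.trans h2
        have := dvd_add h3 hmu'
        simpa using this
      obtain ⟨c, hc⟩ := Polynomial.binomExpansion (polyIter f lam) b₀ d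
      have hb0d : b₀ + d = b₁ := by rw [hd]; ring
      rw [hb0d] at hc
      have heq : b₂ - b₁ = (Polynomial.derivative (polyIter f lam)).eval b₀ * d + c * d^2 := by
        rw [hb₂', hc, hb₁']; ring
      rw [heq]
      have hterm1 : (p : ℤ)^(j+2) ∣ (Polynomial.derivative (polyIter f lam)).eval b₀ * d := by
        have := mul_dvd_mul hderb ih
        rwa [← pow_succ'] at this
      have hterm2 : (p : ℤ)^(j+2) ∣ c * d^2 := by
        have h1 : (p : ℤ)^(j+1) * (p : ℤ)^(j+1) ∣ d * d := mul_dvd_mul ih ih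
        have h2 : (p : ℤ)^(j+2) ∣ (p : ℤ)^(j+1) * (p : ℤ)^(j+1) := by
          rw [← pow_add]; exact pow_dvd_pow _ (by omega)
        have h3 : (p : ℤ)^(j+2) ∣ d^2 := by rw [sq]; exact h2.trans h1
        exact Dvd.dvd.mul_left h3 c
      exact dvd_add hterm1 hterm2
  -- key relation mod p^k
  have hkey : ((p^(k'+1) : ℕ) : ℤ) ∣
      xSeq f a ((rho + k'*lam) + lam) - xSeq f a (rho + k'*lam) := by
    have := lift k'
    rw [show (rho + k'*lam) + lam = rho + (k'+1)*lam by ring]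
    push_cast
    exact this
  have hpk0 : 0 < p ^ (k'+1) := Nat.pow_pos hp0
  constructor
  · -- cycle equality
    have hle : polyCycle f a (p^(k'+1)) ≤ lam :=
      Nat.sInf_le ⟨hlampos, rho + k'*lam, hkey⟩
    obtain ⟨hpos', k₀', h'⟩ := cycle_mem f a (p^(k'+1)) hpk0
    have hdvdp : (p : ℤ) ∣ ((p^(k'+1) : ℕ) : ℤ) := by
      push_cast; exact dvd_pow_self _ (Nat.succ_ne_zero k')
    have hdvd' : (p : ℤ) ∣ xSeq f a (k₀' + polyCycle f a (p^(k'+1))) - xSeq f a k₀' :=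
      hdvdp.trans h'
    have hldvd : lam ∣ polyCycle f a (p^(k'+1)) := cycle_dvd f a p hp0 k₀' _ hpos' hdvd'
    exact le_antisymm hle (Nat.le_of_dvd hpos' hldvd)
  · -- tail bound
    simp only [Nat.add_sub_cancel]
    exact Nat.sInf_le ⟨lam, hlampos, hkey⟩
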